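/- Let p₁ = N(μ₁, Σ), p₂ = N(μ₂, Σ) be homoscedastic Gaussian densities on ℝ^D with Σ positive definite, μ₁ ≠ μ₂. Let μ = (μ₁+μ₂)/2 and define α(x) = exp(½(x−μ)ᵀΣ⁻¹(x−μ)). Then for all x ∈ ℝ^D, (∇log α(x))ᵀ(∇log p₁(x) − ∇log p₂(x)) + ½(∇²p₁(x)/p₁(x) − ∇²p₂(x)/p₂(x)) = 0, i.e., α makes the leading-order bias term B_{α;p₁,p₂} vanish identically. -/

import Mathlib

open Real

/-- Laplacian of a scalar function on `ℝ^D`. -/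
noncomputable def lap {D : ℕ} (f : EuclideanSpace ℝ (Fin D) → ℝ)
    (x : EuclideanSpace ℝ (Fin D)) : ℝ :=
  ∑ i, fderiv ℝ (fun y => fderiv ℝ f y (EuclideanSpace.single i 1)) x
      (EuclideanSpace.single i 1)

/-- Quadratic form `vᵀ M v`. -/
def quadForm {D : ℕ} (M : Matrix (Fin D) (Fin D) ℝ) (v : Fin D → ℝ) : ℝ :=
  ∑ i, ∑ j, v i * M i j * v j

/-- Multivariate Gaussian density `N(x; μ, S)` on `ℝ^D`. -/
noncomputable def gaussDensity {D : ℕ} (μ : Fin D → ℝ)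
    (S : Matrix (Fin D) (Fin D) ℝ) (x : EuclideanSpace ℝ (Fin D)) : ℝ :=
  (2 * π) ^ (-(D : ℝ) / 2) * S.det ^ (-(1 : ℝ) / 2) *
    Real.exp (-(1 / 2) * quadForm S⁻¹ (fun i => x i - μ i))

noncomputable def wv {D : ℕ} (M : Matrix (Fin D) (Fin D) ℝ) (μ : Fin D → ℝ)
    (x : EuclideanSpace ℝ (Fin D)) (i : Fin D) : ℝ :=
  ∑ j, M i j * (x j - μ j)

lemma hasFDerivAt_coord {D : ℕ} (μ : Fin D → ℝ) (x : EuclideanSpace ℝ (Fin D)) (i : Fin D) :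
    HasFDerivAt (fun y : EuclideanSpace ℝ (Fin D) => y i - μ i)
      (EuclideanSpace.proj i : EuclideanSpace ℝ (Fin D) →L[ℝ] ℝ) x := by
  have := ((EuclideanSpace.proj (𝕜 := ℝ) i).hasFDerivAt (x := x)).sub_const (μ i)
  exact this

lemma hasFDerivAt_quad {D : ℕ} (M : Matrix (Fin D) (Fin D) ℝ)
    (hM : ∀ i j, M i j = M j i) (μ : Fin D → ℝ) (x : EuclideanSpace ℝ (Fin D)) :
    HasFDerivAt (fun y : EuclideanSpace ℝ (Fin D) => quadForm M (fun i => y i - μ i))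
      (∑ i, (2 * wv M μ x i) • (EuclideanSpace.proj i : EuclideanSpace ℝ (Fin D) →L[ℝ] ℝ)) x := by
  have H : HasFDerivAt (fun y : EuclideanSpace ℝ (Fin D) => quadForm M (fun i => y i - μ i))
      (∑ i, ∑ j, (((x i - μ i) * M i j) • (EuclideanSpace.proj j : EuclideanSpace ℝ (Fin D) →L[ℝ] ℝ)
        + (x j - μ j) • (M i j • (EuclideanSpace.proj i : EuclideanSpace ℝ (Fin D) →L[ℝ] ℝ)))) x := by
    simp only [quadForm]
    apply HasFDerivAt.fun_sum; intro i _
    apply HasFDerivAt.fun_sum; intro j _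
    exact ((hasFDerivAt_coord μ x i).mul_const (M i j)).mul (hasFDerivAt_coord μ x j)
  convert H using 1
  ext v
  simp only [ContinuousLinearMap.sum_apply, ContinuousLinearMap.smul_apply,
    ContinuousLinearMap.add_apply, smul_eq_mul, PiLp.proj_apply, wv]
  simp_rw [Finset.sum_add_distrib]
  rw [Finset.sum_comm, ← Finset.sum_add_distrib]
  refine Finset.sum_congr rfl fun i _ => ?_
  rw [Finset.mul_sum, Finset.sum_mul, ← Finset.sum_add_distrib]
  refine Finset.sum_congr rfl fun j _ => ?_
  rw [hM j i]
  ring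

lemma hasGradientAt_aff {D : ℕ} (M : Matrix (Fin D) (Fin D) ℝ)
    (hM : ∀ i j, M i j = M j i) (μ : Fin D → ℝ) (x : EuclideanSpace ℝ (Fin D)) (a c : ℝ) :
    HasGradientAt (fun y : EuclideanSpace ℝ (Fin D) =>
        a + c * quadForm M (fun i => y i - μ i))
      ((WithLp.equiv 2 (Fin D → ℝ)).symm (fun i => 2 * c * wv M μ x i)) x := by
  rw [hasGradientAt_iff_hasFDerivAt]
  have H := ((hasFDerivAt_quad M hM μ x).const_mul c).const_add a
  refine H.congr_fderiv ?_
  ext v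
  simp only [InnerProductSpace.toDual_apply_apply, PiLp.inner_apply, WithLp.equiv_symm_apply, PiLp.toLp_apply,
    RCLike.inner_apply, conj_trivial, ContinuousLinearMap.smul_apply,
    ContinuousLinearMap.sum_apply, smul_eq_mul, PiLp.proj_apply, Finset.mul_sum]
  exact Finset.sum_congr rfl fun i _ => by ring

lemma hasFDerivAt_gauss {D : ℕ} (M : Matrix (Fin D) (Fin D) ℝ)
    (hM : ∀ i j, M i j = M j i) (μ : Fin D → ℝ) (c₀ : ℝ) (y : EuclideanSpace ℝ (Fin D)) :
    HasFDerivAt (fun z : EuclideanSpace ℝ (Fin D) =>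
        c₀ * Real.exp (-(1/2) * quadForm M (fun i => z i - μ i)))
      ((c₀ * Real.exp (-(1/2) * quadForm M (fun i => y i - μ i))) •
        (∑ i, (-(wv M μ y i)) • (EuclideanSpace.proj i : EuclideanSpace ℝ (Fin D) →L[ℝ] ℝ))) y := by
  have H := (((hasFDerivAt_quad M hM μ y).const_mul (-(1/2):ℝ)).exp).const_mul c₀
  refine H.congr_fderiv ?_
  ext v
  simp only [ContinuousLinearMap.smul_apply, ContinuousLinearMap.sum_apply, smul_eq_mul,
    PiLp.proj_apply, Finset.mul_sum, Finset.sum_mul]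
  exact Finset.sum_congr rfl fun i _ => by ring

lemma fderiv_gauss_single {D : ℕ} (M : Matrix (Fin D) (Fin D) ℝ)
    (hM : ∀ i j, M i j = M j i) (μ : Fin D → ℝ) (c₀ : ℝ) (y : EuclideanSpace ℝ (Fin D))
    (i : Fin D) :
    fderiv ℝ (fun z : EuclideanSpace ℝ (Fin D) =>
        c₀ * Real.exp (-(1/2) * quadForm M (fun i => z i - μ i))) y
        (EuclideanSpace.single i 1)
      = (c₀ * Real.exp (-(1/2) * quadForm M (fun i => y i - μ i))) * (-(wv M μ y i)) := by
  rw [(hasFDerivAt_gauss M hM μ c₀ y).fderiv]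
  simp only [ContinuousLinearMap.smul_apply, ContinuousLinearMap.sum_apply, smul_eq_mul,
    PiLp.proj_apply, EuclideanSpace.single_apply]
  simp only [mul_ite, mul_one, mul_zero, Finset.sum_ite_eq', Finset.mem_univ, if_true]

lemma hasFDerivAt_wv {D : ℕ} (M : Matrix (Fin D) (Fin D) ℝ) (μ : Fin D → ℝ) (i : Fin D)
    (x : EuclideanSpace ℝ (Fin D)) :
    HasFDerivAt (fun y : EuclideanSpace ℝ (Fin D) => wv M μ y i)
      (∑ j, M i j • (EuclideanSpace.proj j : EuclideanSpace ℝ (Fin D) →L[ℝ] ℝ)) x := by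
  unfold wv
  exact HasFDerivAt.fun_sum fun j _ => (hasFDerivAt_coord μ x j).const_mul (M i j)

lemma lap_gauss {D : ℕ} (M : Matrix (Fin D) (Fin D) ℝ)
    (hM : ∀ i j, M i j = M j i) (μ : Fin D → ℝ) (c₀ : ℝ) (x : EuclideanSpace ℝ (Fin D)) :
    lap (fun z : EuclideanSpace ℝ (Fin D) =>
        c₀ * Real.exp (-(1/2) * quadForm M (fun i => z i - μ i))) x
      = (c₀ * Real.exp (-(1/2) * quadForm M (fun i => x i - μ i))) *
          ((∑ i, (wv M μ x i)^2) - ∑ i, M i i) := by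
  set p : EuclideanSpace ℝ (Fin D) → ℝ := fun z =>
    c₀ * Real.exp (-(1/2) * quadForm M (fun i => z i - μ i)) with hp
  unfold lap
  have h1 : ∀ i : Fin D, (fun y => fderiv ℝ p y (EuclideanSpace.single i 1))
      = fun y => p y * (-(wv M μ y i)) :=
    fun i => funext fun y => fderiv_gauss_single M hM μ c₀ y i
  have h2 : ∀ i : Fin D,
      fderiv ℝ (fun y => p y * (-(wv M μ y i))) x (EuclideanSpace.single i 1)
        = p x * ((wv M μ x i)^2 - M i i) := by
    intro i
    have hw := (hasFDerivAt_wv M μ i x).fun_neg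
    have H := (hasFDerivAt_gauss M hM μ c₀ x).fun_mul hw
    rw [H.fderiv]
    simp only [ContinuousLinearMap.add_apply, ContinuousLinearMap.smul_apply,
      ContinuousLinearMap.neg_apply, ContinuousLinearMap.sum_apply, smul_eq_mul,
      PiLp.proj_apply, EuclideanSpace.single_apply, mul_ite, mul_one, mul_zero,
      Finset.sum_ite_eq', Finset.mem_univ, if_true]
    ring
  calc ∑ i, fderiv ℝ (fun y => fderiv ℝ p y (EuclideanSpace.single i 1)) x
        (EuclideanSpace.single i 1)
      = ∑ i, p x * ((wv M μ x i)^2 - M i i) := by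
        refine Finset.sum_congr rfl fun i _ => ?_
        rw [h1 i, h2 i]
    _ = p x * ((∑ i, (wv M μ x i)^2) - ∑ i, M i i) := by
        rw [mul_sub, Finset.mul_sum, Finset.mul_sum, ← Finset.sum_sub_distrib]
        exact Finset.sum_congr rfl fun i _ => by ring

theorem optimal_weight_kills_bias {D : ℕ}
    (μ₁ μ₂ : Fin D → ℝ) (S : Matrix (Fin D) (Fin D) ℝ)
    (hS : S.PosDef) (hμ : μ₁ ≠ μ₂) :
    let μ : Fin D → ℝ := fun i => (μ₁ i + μ₂ i) / 2
    let α : EuclideanSpace ℝ (Fin D) → ℝ := fun x =>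
      Real.exp ((1 / 2) * quadForm S⁻¹ (fun i => x i - μ i))
    let p₁ := gaussDensity μ₁ S
    let p₂ := gaussDensity μ₂ S
    ∀ x : EuclideanSpace ℝ (Fin D),
      (inner ℝ (gradient (fun y => Real.log (α y)) x)
          (gradient (fun y => Real.log (p₁ y)) x
            - gradient (fun y => Real.log (p₂ y)) x) : ℝ)
        + (1 / 2) * (lap p₁ x / p₁ x - lap p₂ x / p₂ x) = 0 := by
  intro μ α p₁ p₂ x
  set M := S⁻¹ with hMdef
  have hM : ∀ i j, M i j = M j i := by
    intro i j
    have h := (hS.inv).1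
    have := congrFun (congrFun h j) i
    rw [hMdef]
    simpa [Matrix.conjTranspose_apply] using this
  have hdet : (0:ℝ) < S.det := hS.det_pos
  set c₀ : ℝ := (2 * π) ^ (-(D : ℝ) / 2) * S.det ^ (-(1 : ℝ) / 2) with hc₀
  have hc₀pos : 0 < c₀ :=
    mul_pos (Real.rpow_pos_of_pos (by positivity) _) (Real.rpow_pos_of_pos hdet _)
  -- gradient of log α
  have hα : (fun y => Real.log (α y))
      = fun y : EuclideanSpace ℝ (Fin D) => (0:ℝ) + (1/2) * quadForm M (fun i => y i - μ i) := by
    funext y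
    show Real.log (Real.exp _) = _
    rw [Real.log_exp, zero_add]
  have hga : gradient (fun y => Real.log (α y)) x
      = (WithLp.equiv 2 (Fin D → ℝ)).symm (fun i => 2 * (1/2) * wv M μ x i) := by
    rw [hα]; exact (hasGradientAt_aff M hM μ x 0 (1/2)).gradient
  have hp₁eq : p₁ = fun y : EuclideanSpace ℝ (Fin D) =>
      c₀ * Real.exp (-(1/2) * quadForm M (fun i => y i - μ₁ i)) := rfl
  have hp₂eq : p₂ = fun y : EuclideanSpace ℝ (Fin D) =>
      c₀ * Real.exp (-(1/2) * quadForm M (fun i => y i - μ₂ i)) := rfl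
  have hlog : ∀ (ν : Fin D → ℝ),
      (fun y : EuclideanSpace ℝ (Fin D) =>
        Real.log (c₀ * Real.exp (-(1/2) * quadForm M (fun i => y i - ν i))))
      = fun y : EuclideanSpace ℝ (Fin D) =>
        Real.log c₀ + (-(1/2)) * quadForm M (fun i => y i - ν i) := by
    intro ν; funext y
    rw [Real.log_mul (ne_of_gt hc₀pos) (Real.exp_ne_zero _), Real.log_exp]
  have hg1 : gradient (fun y => Real.log (p₁ y)) x
      = (WithLp.equiv 2 (Fin D → ℝ)).symm (fun i => 2 * (-(1/2)) * wv M μ₁ x i) := by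
    rw [hp₁eq, hlog μ₁]; exact (hasGradientAt_aff M hM μ₁ x (Real.log c₀) (-(1/2))).gradient
  have hg2 : gradient (fun y => Real.log (p₂ y)) x
      = (WithLp.equiv 2 (Fin D → ℝ)).symm (fun i => 2 * (-(1/2)) * wv M μ₂ x i) := by
    rw [hp₂eq, hlog μ₂]; exact (hasGradientAt_aff M hM μ₂ x (Real.log c₀) (-(1/2))).gradient
  -- Laplacian terms
  have hpx : ∀ (ν : Fin D → ℝ) (y : EuclideanSpace ℝ (Fin D)),
      (0:ℝ) < c₀ * Real.exp (-(1/2) * quadForm M (fun i => y i - ν i)) :=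
    fun ν y => mul_pos hc₀pos (Real.exp_pos _)
  have hdiv1 : lap p₁ x / p₁ x = (∑ i, (wv M μ₁ x i)^2) - ∑ i, M i i := by
    rw [hp₁eq, lap_gauss M hM μ₁ c₀ x, mul_div_cancel_left₀ _ (ne_of_gt (hpx μ₁ x))]
  have hdiv2 : lap p₂ x / p₂ x = (∑ i, (wv M μ₂ x i)^2) - ∑ i, M i i := by
    rw [hp₂eq, lap_gauss M hM μ₂ c₀ x, mul_div_cancel_left₀ _ (ne_of_gt (hpx μ₂ x))]
  rw [hga, hg1, hg2, hdiv1, hdiv2]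
  have hw : ∀ i, wv M μ x i = (wv M μ₁ x i + wv M μ₂ x i) / 2 := by
    intro i
    unfold wv
    rw [← Finset.sum_add_distrib, Finset.sum_div]
    refine Finset.sum_congr rfl fun j _ => ?_
    show M i j * (x j - (μ₁ j + μ₂ j)/2) = _
    ring
  simp only [PiLp.inner_apply, RCLike.inner_apply, conj_trivial,
    WithLp.equiv_symm_apply, PiLp.toLp_apply, PiLp.sub_apply]
  simp_rw [hw]
  rw [sub_sub_sub_cancel_right, ← Finset.sum_sub_distrib, Finset.mul_sum,
    ← Finset.sum_add_distrib]
  exact Finset.sum_eq_zero fun i _ => by ring
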